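/- Let 3 ≤ r ≤ n-2. Define the real matrix M with rows indexed by r-element subsets I of [n] and columns indexed by 2-element subsets J of [n], where M_{I,J} = 1 if J ⊆ I and 0 otherwise. Define the matrix M⁺ with rows indexed by 2-subsets J and columns indexed by r-subsets I, where M⁺_{J,I} = (-1)^{|I∩J|} * ((r-2)/(r-|I∩J|)) * (1 / C(n-2, r-|I∩J|)). Then M⁺ M is the identity matrix of size C(n,2). -/
import Mathlib

open Finset

lemma count_aux {n r : ℕ} (A B : Finset (Fin n)) (hd : Disjoint A B) (hA : A.card ≤ r) :
    ((Finset.powersetCard r (univ : Finset (Fin n))).filter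
        (fun I => A ⊆ I ∧ Disjoint I B)).card
      = (n - (A.card + B.card)).choose (r - A.card) := by
  have key : ((Finset.powersetCard r (univ : Finset (Fin n))).filter
        (fun I => A ⊆ I ∧ Disjoint I B)).card
      = (Finset.powersetCard (r - A.card) ((A ∪ B)ᶜ)).card := by
    apply Finset.card_bij' (fun I _ => I \ A) (fun S _ => S ∪ A)
    · intro I hI
      simp only [mem_filter, Finset.mem_powersetCard_univ] at hI
      obtain ⟨hcard, hAI, hIB⟩ := hI
      rw [Finset.mem_powersetCard]
      constructor
      · intro x hx
        simp only [Finset.mem_sdiff] at hx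
        simp only [Finset.mem_compl, Finset.mem_union]
        rintro (h | h)
        · exact hx.2 h
        · exact (Finset.disjoint_left.mp hIB hx.1) h
      · rw [Finset.card_sdiff_of_subset hAI, hcard]
    · intro S hS
      rw [Finset.mem_powersetCard] at hS
      obtain ⟨hSsub, hScard⟩ := hS
      have hSA : Disjoint S A := by
        rw [Finset.disjoint_left]
        intro x hx hxA
        have := hSsub hx
        simp only [Finset.mem_compl, Finset.mem_union] at this
        exact this (Or.inl hxA)
      have hSB : Disjoint S B := by
        rw [Finset.disjoint_left]
        intro x hx hxB
        have := hSsub hx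
        simp only [Finset.mem_compl, Finset.mem_union] at this
        exact this (Or.inr hxB)
      simp only [mem_filter, Finset.mem_powersetCard_univ]
      refine ⟨?_, Finset.subset_union_right, ?_⟩
      · rw [Finset.card_union_of_disjoint hSA, hScard]
        omega
      · exact Finset.disjoint_union_left.mpr ⟨hSB, hd⟩
    · intro I hI
      simp only [mem_filter, Finset.mem_powersetCard_univ] at hI
      exact Finset.sdiff_union_of_subset hI.2.1
    · intro S hS
      rw [Finset.mem_powersetCard] at hS
      have hSA : Disjoint S A := by
        rw [Finset.disjoint_left]
        intro x hx hxA
        have := hS.1 hx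
        simp only [Finset.mem_compl, Finset.mem_union] at this
        exact this (Or.inl hxA)
      exact Finset.union_sdiff_cancel_right hSA
  rw [key, Finset.card_powersetCard, Finset.card_compl,
    Finset.card_union_of_disjoint hd, Fintype.card_fin]

noncomputable def fval (s t k : ℕ) : ℝ :=
  (-1 : ℝ) ^ k * (((s : ℝ) + 1) / ((s : ℝ) + 3 - (k : ℝ))) *
    (1 / (((s + t + 3).choose (s + 3 - k)) : ℝ))

lemma count_aux'' {n r : ℕ} (p : Finset (Fin n) → Prop) [DecidablePred p]
    (A B : Finset (Fin n)) (a b : ℕ) (hd : Disjoint A B)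
    (hA : A.card = a) (hB : B.card = b) (har : a ≤ r)
    (hp : ∀ I, p I ↔ (A ⊆ I ∧ Disjoint I B)) :
    ((Finset.powersetCard r (univ : Finset (Fin n))).filter p).card
      = (n - (a + b)).choose (r - a) := by
  rw [Finset.filter_congr (fun I _ => hp I), ← hA, ← hB]
  exact count_aux A B hd (hA ▸ har)

lemma sum_part {n r : ℕ} (J : Finset (Fin n)) (s t : ℕ)
    (p : Finset (Fin n) → Prop) [DecidablePred p] (k c : ℕ)
    (hval : ∀ I ∈ (Finset.powersetCard r (univ : Finset (Fin n))).filter p,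
      (I ∩ J).card = k)
    (hcount : ((Finset.powersetCard r (univ : Finset (Fin n))).filter p).card = c) :
    ∑ I ∈ (Finset.powersetCard r (univ : Finset (Fin n))).filter p,
      fval s t ((I ∩ J).card) = (c : ℝ) * fval s t k := by
  rw [Finset.sum_congr rfl (fun I hI => by rw [hval I hI]), Finset.sum_const,
    nsmul_eq_mul, hcount]


lemma choose_ne (m k : ℕ) (h : k ≤ m) : ((m.choose k : ℝ)) ≠ 0 := by
  exact_mod_cast (Nat.choose_pos h).ne'

lemma fval2 (s t : ℕ) : fval s t 2 = 1 / (((s + t + 3).choose (s + 1)) : ℝ) := by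
  have hs : ((s : ℝ) + 1) ≠ 0 := by positivity
  have h1 : s + 3 - 2 = s + 1 := by omega
  simp only [fval, h1]
  have h2 : ((s : ℝ) + 3 - (2 : ℕ)) = (s : ℝ) + 1 := by push_cast; ring
  rw [h2, div_self hs]
  norm_num

lemma fval1 (s t : ℕ) :
    fval s t 1 = -(((s : ℝ) + 1) / ((s : ℝ) + 2)) * (1 / (((s + t + 3).choose (s + 2)) : ℝ)) := by
  have h1 : s + 3 - 1 = s + 2 := by omega
  simp only [fval, h1]
  have h2 : ((s : ℝ) + 3 - (1 : ℕ)) = (s : ℝ) + 2 := by push_cast; ring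
  rw [h2]
  ring

lemma fval0 (s t : ℕ) :
    fval s t 0 = (((s : ℝ) + 1) / ((s : ℝ) + 3)) * (1 / (((s + t + 3).choose (s + 3)) : ℝ)) := by
  simp only [fval]
  norm_num

lemma arith1 (s t : ℕ) : (((s + t + 3).choose (s + 1) : ℝ)) * fval s t 2 = 1 := by
  rw [fval2, mul_one_div, div_self (choose_ne _ _ (by omega))]

lemma arith2 (s t : ℕ) : (((s + t + 2).choose s : ℝ)) * fval s t 2
    + (((s + t + 2).choose (s + 1) : ℝ)) * fval s t 1 = 0 := by
  have e1n : (s+t+3) * ((s+t+2).choose s) = ((s+t+3).choose (s+1)) * (s+1) :=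
    Nat.add_one_mul_choose_eq (s+t+2) s
  have e2n : (s+t+3) * ((s+t+2).choose (s+1)) = ((s+t+3).choose (s+2)) * (s+2) :=
    Nat.add_one_mul_choose_eq (s+t+2) (s+1)
  have e1 : ((s:ℝ)+(t:ℝ)+3) * (((s+t+2).choose s : ℕ) : ℝ)
      = (((s+t+3).choose (s+1) : ℕ) : ℝ) * ((s:ℝ)+1) := by exact_mod_cast e1n
  have e2 : ((s:ℝ)+(t:ℝ)+3) * (((s+t+2).choose (s+1) : ℕ) : ℝ)
      = (((s+t+3).choose (s+2) : ℕ) : ℝ) * ((s:ℝ)+2) := by exact_mod_cast e2n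
  have hX2 : (((s + t + 3).choose (s + 1)) : ℝ) ≠ 0 := choose_ne _ _ (by omega)
  have hX1 : (((s + t + 3).choose (s + 2)) : ℝ) ≠ 0 := choose_ne _ _ (by omega)
  have hs1 : ((s : ℝ) + 1) ≠ 0 := by positivity
  have hs2 : ((s : ℝ) + 2) ≠ 0 := by positivity
  have hq : ((s : ℝ) + (t : ℝ) + 3) ≠ 0 := by positivity
  have hc2 : (((s+t+2).choose s : ℕ) : ℝ)
      = (((s+t+3).choose (s+1) : ℕ) : ℝ) * ((s:ℝ)+1) / ((s:ℝ)+(t:ℝ)+3) := by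
    rw [eq_div_iff hq]; linear_combination e1
  have hc1 : (((s+t+2).choose (s+1) : ℕ) : ℝ)
      = (((s+t+3).choose (s+2) : ℕ) : ℝ) * ((s:ℝ)+2) / ((s:ℝ)+(t:ℝ)+3) := by
    rw [eq_div_iff hq]; linear_combination e2
  rw [fval2, fval1, hc2, hc1]
  field_simp
  ring

lemma arith3a (t : ℕ) : (((t + 1).choose 1 : ℝ)) * fval 0 t 0
    + 2 * (((t + 1).choose 0 : ℝ)) * fval 0 t 1 = 0 := by
  have e1n : (t+2) * ((t+1).choose 0) = ((t+2).choose 1) * 1 :=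
    Nat.add_one_mul_choose_eq (t+1) 0
  have e2n : (t+3) * ((t+2).choose 1) = ((t+3).choose 2) * 2 :=
    Nat.add_one_mul_choose_eq (t+2) 1
  have f1n : (t+2) * ((t+1).choose 1) = ((t+2).choose 2) * 2 :=
    Nat.add_one_mul_choose_eq (t+1) 1
  have f2n : (t+3) * ((t+2).choose 2) = ((t+3).choose 3) * 3 :=
    Nat.add_one_mul_choose_eq (t+2) 2
  have e1 : ((t:ℝ)+2) * (((t+1).choose 0 : ℕ) : ℝ) = (((t+2).choose 1 : ℕ) : ℝ) := by
    exact_mod_cast e1n.trans (mul_one _)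
  have e2 : ((t:ℝ)+3) * (((t+2).choose 1 : ℕ) : ℝ) = (((t+3).choose 2 : ℕ) : ℝ) * 2 := by
    exact_mod_cast e2n
  have f1 : ((t:ℝ)+2) * (((t+1).choose 1 : ℕ) : ℝ) = (((t+2).choose 2 : ℕ) : ℝ) * 2 := by
    exact_mod_cast f1n
  have f2 : ((t:ℝ)+3) * (((t+2).choose 2 : ℕ) : ℝ) = (((t+3).choose 3 : ℕ) : ℝ) * 3 := by
    exact_mod_cast f2n
  have hX0 : (((t + 3).choose 3) : ℝ) ≠ 0 := choose_ne _ _ (by omega)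
  have hX1 : (((t + 3).choose 2) : ℝ) ≠ 0 := choose_ne _ _ (by omega)
  have ht2 : ((t : ℝ) + 2) ≠ 0 := by positivity
  have ht3 : ((t : ℝ) + 3) ≠ 0 := by positivity
  have hcA : (((t+1).choose 1 : ℕ) : ℝ)
      = (((t+3).choose 3 : ℕ) : ℝ) * 6 / (((t:ℝ)+2) * ((t:ℝ)+3)) := by
    rw [eq_div_iff (mul_ne_zero ht2 ht3)]
    linear_combination ((t:ℝ)+3) * f1 + 2 * f2
  have hcB : (((t+1).choose 0 : ℕ) : ℝ)
      = (((t+3).choose 2 : ℕ) : ℝ) * 2 / (((t:ℝ)+2) * ((t:ℝ)+3)) := by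
    rw [eq_div_iff (mul_ne_zero ht2 ht3)]
    linear_combination ((t:ℝ)+3) * e1 + e2
  have h03 : (0:ℕ) + 3 = 3 := rfl
  have h01 : (0:ℕ) + 1 = 1 := rfl
  rw [fval0, fval1, hcA, hcB]
  norm_num
  field_simp
  ring

lemma arith3b (u t : ℕ) : (((u + t + 2).choose (u + 2) : ℝ)) * fval (u+1) t 0
    + 2 * (((u + t + 2).choose (u + 1) : ℝ)) * fval (u+1) t 1
    + (((u + t + 2).choose u : ℝ)) * fval (u+1) t 2 = 0 := by
  -- n-4 = u+t+2, n-2 = u+t+4,  s = u+1, choose args: s+3 = u+4, s+2 = u+3, s+1 = u+2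
  have eA1n : (u+t+3) * ((u+t+2).choose (u+2)) = ((u+t+3).choose (u+3)) * (u+3) :=
    Nat.add_one_mul_choose_eq (u+t+2) (u+2)
  have eA2n : (u+t+4) * ((u+t+3).choose (u+3)) = ((u+t+4).choose (u+4)) * (u+4) :=
    Nat.add_one_mul_choose_eq (u+t+3) (u+3)
  have eB1n : (u+t+3) * ((u+t+2).choose (u+1)) = ((u+t+3).choose (u+2)) * (u+2) :=
    Nat.add_one_mul_choose_eq (u+t+2) (u+1)
  have eB2n : (u+t+4) * ((u+t+3).choose (u+2)) = ((u+t+4).choose (u+3)) * (u+3) :=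
    Nat.add_one_mul_choose_eq (u+t+3) (u+2)
  have eC1n : (u+t+3) * ((u+t+2).choose u) = ((u+t+3).choose (u+1)) * (u+1) :=
    Nat.add_one_mul_choose_eq (u+t+2) u
  have eC2n : (u+t+4) * ((u+t+3).choose (u+1)) = ((u+t+4).choose (u+2)) * (u+2) :=
    Nat.add_one_mul_choose_eq (u+t+3) (u+1)
  have eA1 : ((u:ℝ)+(t:ℝ)+3) * (((u+t+2).choose (u+2) : ℕ) : ℝ)
      = (((u+t+3).choose (u+3) : ℕ) : ℝ) * ((u:ℝ)+3) := by exact_mod_cast eA1n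
  have eA2 : ((u:ℝ)+(t:ℝ)+4) * (((u+t+3).choose (u+3) : ℕ) : ℝ)
      = (((u+t+4).choose (u+4) : ℕ) : ℝ) * ((u:ℝ)+4) := by exact_mod_cast eA2n
  have eB1 : ((u:ℝ)+(t:ℝ)+3) * (((u+t+2).choose (u+1) : ℕ) : ℝ)
      = (((u+t+3).choose (u+2) : ℕ) : ℝ) * ((u:ℝ)+2) := by exact_mod_cast eB1n
  have eB2 : ((u:ℝ)+(t:ℝ)+4) * (((u+t+3).choose (u+2) : ℕ) : ℝ)
      = (((u+t+4).choose (u+3) : ℕ) : ℝ) * ((u:ℝ)+3) := by exact_mod_cast eB2n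
  have eC1 : ((u:ℝ)+(t:ℝ)+3) * (((u+t+2).choose u : ℕ) : ℝ)
      = (((u+t+3).choose (u+1) : ℕ) : ℝ) * ((u:ℝ)+1) := by exact_mod_cast eC1n
  have eC2 : ((u:ℝ)+(t:ℝ)+4) * (((u+t+3).choose (u+1) : ℕ) : ℝ)
      = (((u+t+4).choose (u+2) : ℕ) : ℝ) * ((u:ℝ)+2) := by exact_mod_cast eC2n
  have hq3 : ((u:ℝ)+(t:ℝ)+3) ≠ 0 := by positivity
  have hq4 : ((u:ℝ)+(t:ℝ)+4) ≠ 0 := by positivity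
  have hXA : (((u+t+4).choose (u+4)) : ℝ) ≠ 0 := choose_ne _ _ (by omega)
  have hXB : (((u+t+4).choose (u+3)) : ℝ) ≠ 0 := choose_ne _ _ (by omega)
  have hXC : (((u+t+4).choose (u+2)) : ℝ) ≠ 0 := choose_ne _ _ (by omega)
  have hu1 : ((u:ℝ)+1) ≠ 0 := by positivity
  have hu2 : ((u:ℝ)+2) ≠ 0 := by positivity
  have hu3 : ((u:ℝ)+3) ≠ 0 := by positivity
  have hu4 : ((u:ℝ)+4) ≠ 0 := by positivity
  have hcA : (((u+t+2).choose (u+2) : ℕ) : ℝ)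
      = (((u+t+4).choose (u+4) : ℕ) : ℝ) * (((u:ℝ)+4)*((u:ℝ)+3)) / (((u:ℝ)+(t:ℝ)+3)*((u:ℝ)+(t:ℝ)+4)) := by
    rw [eq_div_iff (mul_ne_zero hq3 hq4)]
    linear_combination ((u:ℝ)+(t:ℝ)+4) * eA1 + ((u:ℝ)+3) * eA2
  have hcB : (((u+t+2).choose (u+1) : ℕ) : ℝ)
      = (((u+t+4).choose (u+3) : ℕ) : ℝ) * (((u:ℝ)+3)*((u:ℝ)+2)) / (((u:ℝ)+(t:ℝ)+3)*((u:ℝ)+(t:ℝ)+4)) := by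
    rw [eq_div_iff (mul_ne_zero hq3 hq4)]
    linear_combination ((u:ℝ)+(t:ℝ)+4) * eB1 + ((u:ℝ)+2) * eB2
  have hcC : (((u+t+2).choose u : ℕ) : ℝ)
      = (((u+t+4).choose (u+2) : ℕ) : ℝ) * (((u:ℝ)+2)*((u:ℝ)+1)) / (((u:ℝ)+(t:ℝ)+3)*((u:ℝ)+(t:ℝ)+4)) := by
    rw [eq_div_iff (mul_ne_zero hq3 hq4)]
    linear_combination ((u:ℝ)+(t:ℝ)+4) * eC1 + ((u:ℝ)+1) * eC2
  have h1 : u + 1 + t + 3 = u + t + 4 := by omega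
  have h2 : u + 1 + 3 = u + 4 := by omega
  have h3 : u + 1 + 2 = u + 3 := by omega
  have h4 : u + 1 + 1 = u + 2 := by omega
  rw [fval0, fval1, fval2, h1, h2, h3, h4, hcA, hcB, hcC]
  push_cast
  field_simp
  ring
lemma key_case1 (s t : ℕ) (J J' : Finset (Fin (s+t+5))) (hJ : J.card = 2) (hJ' : J'.card = 2)
    (hJJ' : J ≠ J') (h1 : (J ∩ J').card = 1) :
    ∑ I ∈ (Finset.powersetCard (s+3) (univ : Finset (Fin (s+t+5)))).filter
      (fun I => J' ⊆ I), fval s t ((I ∩ J).card) = 0 := by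
  obtain ⟨a, ha⟩ := Finset.card_eq_one.mp h1
  have haJJ' : a ∈ J ∩ J' := ha ▸ Finset.mem_singleton_self a
  have haJ : a ∈ J := (Finset.mem_inter.mp haJJ').1
  have haJ' : a ∈ J' := (Finset.mem_inter.mp haJJ').2
  obtain ⟨b, hb⟩ := Finset.card_eq_one.mp
    (show (J.erase a).card = 1 by rw [Finset.card_erase_of_mem haJ, hJ])
  have hbJ : b ∈ J := Finset.mem_of_mem_erase (hb ▸ Finset.mem_singleton_self b)
  have hba : b ≠ a := Finset.ne_of_mem_erase (hb ▸ Finset.mem_singleton_self b)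
  have hJeq : J = {a, b} := by
    rw [← Finset.insert_erase haJ, hb]
  have hbJ' : b ∉ J' := by
    intro h
    have : b ∈ J ∩ J' := Finset.mem_inter.mpr ⟨hbJ, h⟩
    rw [ha, Finset.mem_singleton] at this
    exact hba this
  rw [← Finset.sum_filter_add_sum_filter_not _ (fun I => b ∈ I), Finset.filter_filter,
    Finset.filter_filter]
  rw [sum_part J s t _ 2 ((s+t+2).choose s)
    (fun I hI => by
      simp only [Finset.mem_filter] at hI
      have hsub : J ⊆ I := by
        rw [hJeq]
        exact Finset.insert_subset (hI.2.1 haJ') (Finset.singleton_subset_iff.mpr hI.2.2)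
      rw [Finset.inter_eq_right.mpr hsub, hJ])
    (by
      rw [count_aux'' _ (insert b J') ∅ 3 0 (Finset.disjoint_empty_right _)
        (by rw [Finset.card_insert_of_notMem hbJ', hJ']) rfl (by omega)
        (fun I => by simp [Finset.insert_subset_iff, and_comm])]
      congr 1 <;> omega)]
  rw [sum_part J s t _ 1 ((s+t+2).choose (s+1))
    (fun I hI => by
      simp only [Finset.mem_filter] at hI
      have : I ∩ J = {a} := by
        ext x
        simp only [Finset.mem_inter, Finset.mem_singleton, hJeq, Finset.mem_insert]
        constructor
        · rintro ⟨hxI, (rfl | hx)⟩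
          · rfl
          · exact absurd (hx ▸ hxI) hI.2.2
        · rintro rfl
          exact ⟨hI.2.1 haJ', Or.inl rfl⟩
      rw [this, Finset.card_singleton])
    (by
      rw [count_aux'' _ J' {b} 2 1 (Finset.disjoint_singleton_right.mpr hbJ')
        hJ' (Finset.card_singleton b) (by omega)
        (fun I => by simp [Finset.disjoint_singleton_right])]
      congr 1 <;> omega)]
  exact arith2 s t

lemma key_case0 (s t : ℕ) (J J' : Finset (Fin (s+t+5))) (hJ : J.card = 2) (hJ' : J'.card = 2)
    (hJJ' : J ≠ J') (h0 : (J ∩ J').card = 0) :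
    ∑ I ∈ (Finset.powersetCard (s+3) (univ : Finset (Fin (s+t+5)))).filter
      (fun I => J' ⊆ I), fval s t ((I ∩ J).card) = 0 := by
  have hdisj : Disjoint J J' :=
    Finset.disjoint_iff_inter_eq_empty.mpr (Finset.card_eq_zero.mp h0)
  obtain ⟨a, b, hab, hJeq⟩ := Finset.card_eq_two.mp hJ
  have haJ : a ∈ J := hJeq ▸ Finset.mem_insert_self a {b}
  have hbJ : b ∈ J := hJeq ▸ Finset.mem_insert_of_mem (Finset.mem_singleton_self b)
  have haJ' : a ∉ J' := Finset.disjoint_left.mp hdisj haJ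
  have hbJ' : b ∉ J' := Finset.disjoint_left.mp hdisj hbJ
  rw [← Finset.sum_filter_add_sum_filter_not _ (fun I => a ∈ I), Finset.filter_filter,
    Finset.filter_filter,
    ← Finset.sum_filter_add_sum_filter_not
      ((Finset.powersetCard (s+3) (univ : Finset (Fin (s+t+5)))).filter
        (fun I => J' ⊆ I ∧ a ∈ I)) (fun I => b ∈ I), Finset.filter_filter,
    Finset.filter_filter,
    ← Finset.sum_filter_add_sum_filter_not
      ((Finset.powersetCard (s+3) (univ : Finset (Fin (s+t+5)))).filter
        (fun I => J' ⊆ I ∧ a ∉ I)) (fun I => b ∈ I), Finset.filter_filter,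
    Finset.filter_filter]
  -- part (a ∈ I, b ∈ I) : value 2
  have val2 : ∀ I ∈ (Finset.powersetCard (s+3) (univ : Finset (Fin (s+t+5)))).filter
      (fun I => (J' ⊆ I ∧ a ∈ I) ∧ b ∈ I), (I ∩ J).card = 2 := by
    intro I hI
    simp only [Finset.mem_filter] at hI
    have hsub : J ⊆ I := by
      rw [hJeq]
      exact Finset.insert_subset hI.2.1.2 (Finset.singleton_subset_iff.mpr hI.2.2)
    rw [Finset.inter_eq_right.mpr hsub, hJ]
  have val1a : ∀ I ∈ (Finset.powersetCard (s+3) (univ : Finset (Fin (s+t+5)))).filter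
      (fun I => (J' ⊆ I ∧ a ∈ I) ∧ b ∉ I), (I ∩ J).card = 1 := by
    intro I hI
    simp only [Finset.mem_filter] at hI
    have : I ∩ J = {a} := by
      ext x
      simp only [Finset.mem_inter, Finset.mem_singleton, hJeq, Finset.mem_insert]
      constructor
      · rintro ⟨hxI, (rfl | hx)⟩
        · rfl
        · exact absurd (hx ▸ hxI) hI.2.2
      · rintro rfl
        exact ⟨hI.2.1.2, Or.inl rfl⟩
    rw [this, Finset.card_singleton]
  have val1b : ∀ I ∈ (Finset.powersetCard (s+3) (univ : Finset (Fin (s+t+5)))).filter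
      (fun I => (J' ⊆ I ∧ a ∉ I) ∧ b ∈ I), (I ∩ J).card = 1 := by
    intro I hI
    simp only [Finset.mem_filter] at hI
    have : I ∩ J = {b} := by
      ext x
      simp only [Finset.mem_inter, Finset.mem_singleton, hJeq, Finset.mem_insert]
      constructor
      · rintro ⟨hxI, (rfl | hx)⟩
        · exact absurd hxI hI.2.1.2
        · exact hx
      · rintro rfl
        exact ⟨hI.2.2, Or.inr rfl⟩
    rw [this, Finset.card_singleton]
  have val0 : ∀ I ∈ (Finset.powersetCard (s+3) (univ : Finset (Fin (s+t+5)))).filter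
      (fun I => (J' ⊆ I ∧ a ∉ I) ∧ b ∉ I), (I ∩ J).card = 0 := by
    intro I hI
    simp only [Finset.mem_filter] at hI
    have : I ∩ J = ∅ := by
      ext x
      simp only [Finset.mem_inter, Finset.notMem_empty, iff_false, hJeq,
        Finset.mem_insert, Finset.mem_singleton, not_and]
      rintro hxI (rfl | rfl)
      · exact hI.2.1.2 hxI
      · exact hI.2.2 hxI
    rw [this, Finset.card_empty]
  -- counts for the three "small" parts
  have hd1 : Disjoint (insert a J') ({b} : Finset (Fin (s+t+5))) := by
    simp [Finset.disjoint_singleton_right, hab.symm, hbJ']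
  have count1a := count_aux'' (n := s+t+5) (r := s+3)
    (fun I => (J' ⊆ I ∧ a ∈ I) ∧ b ∉ I) (insert a J') {b} 3 1 hd1
    (by rw [Finset.card_insert_of_notMem haJ', hJ']) (Finset.card_singleton b) (by omega)
    (fun I => by
      simp [Finset.insert_subset_iff, Finset.disjoint_singleton_right]
      tauto)
  have hd1b : Disjoint (insert b J') ({a} : Finset (Fin (s+t+5))) := by
    simp [Finset.disjoint_singleton_right, hab, haJ']
  have count1b := count_aux'' (n := s+t+5) (r := s+3)
    (fun I => (J' ⊆ I ∧ a ∉ I) ∧ b ∈ I) (insert b J') {a} 3 1 hd1b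
    (by rw [Finset.card_insert_of_notMem hbJ', hJ']) (Finset.card_singleton a) (by omega)
    (fun I => by
      simp [Finset.insert_subset_iff, Finset.disjoint_singleton_right]
      tauto)
  have hd0 : Disjoint J' ({a, b} : Finset (Fin (s+t+5))) := by
    rw [Finset.disjoint_right]
    intro x hx
    simp only [Finset.mem_insert, Finset.mem_singleton] at hx
    rcases hx with rfl | rfl
    · exact haJ'
    · exact hbJ'
  have count0 := count_aux'' (n := s+t+5) (r := s+3)
    (fun I => (J' ⊆ I ∧ a ∉ I) ∧ b ∉ I) J' {a, b} 2 2 hd0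
    hJ' (by rw [Finset.card_insert_of_notMem (by simpa using hab), Finset.card_singleton])
    (by omega)
    (fun I => by
      simp only [Finset.disjoint_insert_right, Finset.disjoint_singleton_right]
      tauto)
  rw [sum_part J s t _ 1 ((s+t+1).choose s) val1a (by rw [count1a]; congr 1 <;> omega)]
  rw [sum_part J s t _ 1 ((s+t+1).choose s) val1b (by rw [count1b]; congr 1 <;> omega)]
  rw [sum_part J s t _ 0 ((s+t+1).choose (s+1)) val0 (by rw [count0]; congr 1 <;> omega)]
  -- big part: split on s
  rcases Nat.eq_zero_or_pos s with hs | hs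
  · subst hs
    have hempty : (Finset.powersetCard (0+3) (univ : Finset (Fin (0+t+5)))).filter
        (fun I => (J' ⊆ I ∧ a ∈ I) ∧ b ∈ I) = ∅ := by
      rw [Finset.filter_eq_empty_iff]
      intro I hI
      rw [Finset.mem_powersetCard_univ] at hI
      rintro ⟨⟨hJ'I, haI⟩, hbI⟩
      have hsub : insert a (insert b J') ⊆ I := by
        rw [Finset.insert_subset_iff, Finset.insert_subset_iff]
        exact ⟨haI, hbI, hJ'I⟩
      have hcard : (insert a (insert b J')).card = 4 := by
        rw [Finset.card_insert_of_notMem, Finset.card_insert_of_notMem hbJ', hJ']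
        simp only [Finset.mem_insert]
        rintro (rfl | h)
        · exact hab rfl
        · exact haJ' h
      have := Finset.card_le_card hsub
      omega
    rw [hempty, Finset.sum_empty]
    simp only [Nat.zero_add]
    linear_combination arith3a t
  · obtain ⟨u, rfl⟩ : ∃ u, s = u + 1 := ⟨s - 1, by omega⟩
    have count2 := count_aux'' (n := u+1+t+5) (r := u+1+3)
      (fun I => (J' ⊆ I ∧ a ∈ I) ∧ b ∈ I) (insert a (insert b J')) ∅ 4 0
      (Finset.disjoint_empty_right _)
      (by
        rw [Finset.card_insert_of_notMem, Finset.card_insert_of_notMem hbJ', hJ']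
        simp only [Finset.mem_insert]
        rintro (rfl | h)
        · exact hab rfl
        · exact haJ' h)
      rfl (by omega)
      (fun I => by
        simp [Finset.insert_subset_iff]
        tauto)
    rw [sum_part J (u+1) t _ 2 ((u+t+2).choose u) val2 (by rw [count2]; congr 1 <;> omega)]
    rw [show u+1+t+1 = u+t+2 from by omega, show u+1+1 = u+2 from by omega]
    linear_combination arith3b u t

lemma key (s t : ℕ) (J J' : Finset (Fin (s+t+5))) (hJ : J.card = 2) (hJ' : J'.card = 2) :
    ∑ I ∈ Finset.powersetCard (s+3) (univ : Finset (Fin (s+t+5))),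
      (if J' ⊆ I then fval s t ((I ∩ J).card) else 0) = if J = J' then 1 else 0 := by
  rw [← Finset.sum_filter]
  by_cases hJJ' : J = J'
  · subst hJJ'
    rw [if_pos rfl]
    rw [sum_part J s t _ 2 ((s+t+3).choose (s+1))
      (fun I hI => by
        simp only [Finset.mem_filter] at hI
        rw [Finset.inter_eq_right.mpr hI.2, hJ])
      (by
        rw [count_aux'' (fun I => J ⊆ I) J ∅ 2 0 (Finset.disjoint_empty_right _) hJ rfl
          (by omega) (fun I => by simp)]
        congr 1 <;> omega)]
    exact arith1 s t
  · rw [if_neg hJJ']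
    have hle : (J ∩ J').card ≤ 2 :=
      le_trans (Finset.card_le_card Finset.inter_subset_left) (le_of_eq hJ)
    have h2 : (J ∩ J').card ≠ 2 := by
      intro h
      have e1 : J ∩ J' = J :=
        Finset.eq_of_subset_of_card_le Finset.inter_subset_left (by omega)
      have hsub : J ⊆ J' := by
        intro x hx
        have hx' : x ∈ J ∩ J' := by rw [e1]; exact hx
        exact (Finset.mem_inter.mp hx').2
      exact hJJ' (Finset.eq_of_subset_of_card_le hsub (by omega))
    rcases (show (J ∩ J').card = 0 ∨ (J ∩ J').card = 1 by omega) with h | h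
    · exact key_case0 s t J J' hJ hJ' hJJ' h
    · exact key_case1 s t J J' hJ hJ' hJJ' h

/-- `M⁺ M = Id` for the incidence matrix `M` between `r`-subsets and `2`-subsets
of `[n]` and the explicit matrix `M⁺`, for `3 ≤ r ≤ n-2`. -/
theorem stmt_3 (n r : ℕ) (hr : 3 ≤ r) (hrn : r ≤ n - 2)
    (M : Matrix {I : Finset (Fin n) // I.card = r} {J : Finset (Fin n) // J.card = 2} ℝ)
    (hM : ∀ I J, M I J = if J.1 ⊆ I.1 then 1 else 0)
    (Mplus : Matrix {J : Finset (Fin n) // J.card = 2} {I : Finset (Fin n) // I.card = r} ℝ)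
    (hMplus : ∀ J I, Mplus J I =
      (-1 : ℝ) ^ ((I.1 ∩ J.1).card) * (((r : ℝ) - 2) / ((r : ℝ) - ((I.1 ∩ J.1).card : ℝ))) *
        (1 / (Nat.choose (n - 2) (r - (I.1 ∩ J.1).card) : ℝ))) :
    Mplus * M = 1 := by
  obtain ⟨s, rfl⟩ : ∃ s, r = s + 3 := ⟨r - 3, by omega⟩
  obtain ⟨t, rfl⟩ : ∃ t, n = s + t + 5 := ⟨n - s - 5, by omega⟩
  ext J J'
  rw [Matrix.mul_apply, Matrix.one_apply]
  have hterm : ∀ x : {I : Finset (Fin (s+t+5)) // I.card = s+3},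
      Mplus J x * M x J' = if J'.1 ⊆ x.1 then fval s t ((x.1 ∩ J.1).card) else 0 := by
    intro x
    rw [hM, hMplus, mul_ite, mul_one, mul_zero]
    by_cases hc : J'.1 ⊆ x.1
    · rw [if_pos hc, if_pos hc]
      simp only [fval]
      rw [show s + t + 5 - 2 = s + t + 3 from by omega]
      push_cast
      ring
    · rw [if_neg hc, if_neg hc]
  rw [Finset.sum_congr rfl (fun x _ => hterm x),
    ← Finset.sum_subtype (Finset.powersetCard (s+3) (univ : Finset (Fin (s+t+5))))
      (fun x => Finset.mem_powersetCard_univ)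
      (fun I => if J'.1 ⊆ I then fval s t ((I ∩ J.1).card) else 0),
    key s t J.1 J'.1 J.2 J'.2]
  by_cases h : J = J'
  · rw [if_pos h, if_pos (congrArg Subtype.val h)]
  · rw [if_neg h, if_neg (fun hh => h (Subtype.ext hh))]
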